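/- Let C be a cartesian closed category and ◇ : C → C an endofunctor equipped with a natural transformation p : Id ⟶ ◇ which preserves finite products, and suppose that for every morphism f : ◇X → X there exists a unique morphism f‡ : 1 → X with f‡ = f ∘ p_X ∘ f‡ (a weak model of guarded fixpoint terms). Then (C, ◇) is a unique guarded fixpoint category: for every f : ◇X × Y → X there exists a unique morphism s : Y → X with s = f ∘ (p_X × id_Y) ∘ ⟨s, id_Y⟩. -/

import Mathlib

open CategoryTheory CategoryTheory.Limits MonoidalCategory

universe v u

namespace WeakModelAux

open MonoidalCategory CartesianMonoidalCategory CartesianClosed MonoidalClosed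

variable {C : Type u} [Category.{v} C] [CartesianMonoidalCategory C] [MonoidalClosed C]

theorem aux (D : C ⥤ C) (p : 𝟭 C ⟶ D) [PreservesFiniteProducts D]
    (hweak : ∀ (X : C) (f : D.obj X ⟶ X), ∃! s : ⊤_ C ⟶ X, s = s ≫ p.app X ≫ f)
    (X Y : C) (f : D.obj X ⊗ Y ⟶ X) :
    ∃! s : Y ⟶ X, s = lift s (𝟙 Y) ≫ (p.app X ⊗ₘ 𝟙 Y) ≫ f := by
  classical
  set E : C := Y ⟹ X with hE
  set ev : Y ⊗ E ⟶ X := (ihom.ev Y).app X with hev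
  set μ : D.obj (Y ⊗ E) ⟶ D.obj Y ⊗ D.obj E := prodComparison D Y E with hμ
  have hiso : IsIso μ := by rw [hμ]; infer_instance
  set k : Y ⊗ D.obj E ⟶ D.obj X := (p.app Y ⊗ₘ 𝟙 (D.obj E)) ≫ inv μ ≫ D.map ev with hk
  set g : D.obj E ⟶ E := curry (lift k (fst Y (D.obj E)) ≫ f) with hg
  set S : (⊤_ C ⟶ E) → (Y ⟶ X) := fun t => lift (𝟙 Y) (terminal.from Y ≫ t) ≫ ev with hS
  -- basic description of S via uncurry
  have hSdesc : ∀ t : ⊤_ C ⟶ E, S t = lift (𝟙 Y) (terminal.from Y) ≫ uncurry t := by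
    intro t
    rw [hS, uncurry_eq]
    have : lift (𝟙 Y) (terminal.from Y) ≫ (Y ◁ t) = lift (𝟙 Y) (terminal.from Y ≫ t) := by
      apply CartesianMonoidalCategory.hom_ext <;> simp
    rw [← Category.assoc, this]
  -- injectivity of S
  have h_inj : Function.Injective S := by
    intro t t' h
    apply uncurry_injective (A := Y)
    have hrec : ∀ u : ⊤_ C ⟶ E, uncurry u = fst Y (⊤_ C) ≫ S u := by
      intro u
      rw [hSdesc, ← Category.assoc]
      have : fst Y (⊤_ C) ≫ lift (𝟙 Y) (terminal.from Y) = 𝟙 _ := by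
        apply CartesianMonoidalCategory.hom_ext
        · simp
        · apply Subsingleton.elim
      rw [this, Category.id_comp]
    rw [hrec, hrec, h]
  -- the key computation
  have h2 : ∀ t : ⊤_ C ⟶ E,
      S (t ≫ p.app E ≫ g) = lift (S t) (𝟙 Y) ≫ (p.app X ⊗ₘ 𝟙 Y) ≫ f := by
    intro t
    set b : Y ⟶ E := terminal.from Y ≫ t with hb
    set a : Y ⟶ D.obj E := b ≫ p.app E with ha
    have hμp : p.app (Y ⊗ E) ≫ μ = (p.app Y ⊗ₘ p.app E) := by
      apply CartesianMonoidalCategory.hom_ext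
      · rw [Category.assoc, hμ, CartesianMonoidalCategory.prodComparison_fst, CartesianMonoidalCategory.tensorHom_fst]
        exact (p.naturality (fst Y E)).symm
      · rw [Category.assoc, hμ, CartesianMonoidalCategory.prodComparison_snd, CartesianMonoidalCategory.tensorHom_snd]
        exact (p.naturality (snd Y E)).symm
    have hinvμ : (p.app Y ⊗ₘ p.app E) ≫ inv μ = p.app (Y ⊗ E) := by
      rw [← hμp, Category.assoc, IsIso.hom_inv_id, Category.comp_id]
    have step1 : lift (𝟙 Y) a ≫ k = S t ≫ p.app X := by
      rw [hk]
      have e1 : lift (𝟙 Y) a ≫ (p.app Y ⊗ₘ 𝟙 (D.obj E)) = lift (p.app Y) a := by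
        apply CartesianMonoidalCategory.hom_ext <;> simp
      have e2 : lift (p.app Y) a = lift (𝟙 Y) b ≫ (p.app Y ⊗ₘ p.app E) := by
        apply CartesianMonoidalCategory.hom_ext
        · simp
        · have := p.naturality b
          simp only [Functor.id_map] at this
          simp [ha, this]
      have e3 : p.app (Y ⊗ E) ≫ D.map ev = ev ≫ p.app X := (p.naturality ev).symm
      rw [← Category.assoc, e1, e2, Category.assoc, reassoc_of% hinvμ, e3]
      simp only [hS, hb, Category.assoc]
    -- now compute
    have expand : S (t ≫ p.app E ≫ g) = lift (𝟙 Y) a ≫ (Y ◁ g) ≫ ev := by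
      simp only [hS]
      rw [← Category.assoc (lift (𝟙 Y) a)]
      congr 1
      apply CartesianMonoidalCategory.hom_ext <;> simp [ha, hb]
    have huncg : (Y ◁ g) ≫ ev = lift k (fst Y (D.obj E)) ≫ f := by
      have := uncurry_curry (lift k (fst Y (D.obj E)) ≫ f)
      rw [uncurry_eq] at this
      rw [hev, hg]; exact this
    rw [expand, huncg, ← Category.assoc]
    have e4 : lift (𝟙 Y) a ≫ lift k (fst Y (D.obj E)) = lift (lift (𝟙 Y) a ≫ k) (𝟙 Y) := by
      apply CartesianMonoidalCategory.hom_ext <;> simp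
    rw [e4, step1]
    have e5 : lift (S t ≫ p.app X) (𝟙 Y) = lift (S t) (𝟙 Y) ≫ (p.app X ⊗ₘ 𝟙 Y) := by
      apply CartesianMonoidalCategory.hom_ext <;> simp
    rw [e5, Category.assoc]
  -- wrap up
  obtain ⟨t, ht, htu⟩ := hweak E g
  refine ⟨S t, ?_, ?_⟩
  · have := h2 t
    rw [← ht] at this
    exact this
  · intro s' hs'
    set t' : ⊤_ C ⟶ E := curry (fst Y (⊤_ C) ≫ s') with ht'
    have hSt' : S t' = s' := by
      rw [hSdesc, ht', uncurry_curry, ← Category.assoc]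
      have : lift (𝟙 Y) (terminal.from Y) ≫ fst Y (⊤_ C) = 𝟙 Y := lift_fst _ _
      rw [this, Category.id_comp]
    have hfix : S (t' ≫ p.app E ≫ g) = S t' := by
      rw [h2 t', hSt', ← hs']
    have := htu t' (h_inj hfix).symm
    rw [← hSt', this]

end WeakModelAux

/-- **Weak models of guarded fixpoint terms which are cartesian closed are unique guarded
fixpoint categories.**  Let `C` be cartesian closed, `◇ : C ⥤ C` be a pointed endofunctor
(with point `p : Id ⟶ ◇`) preserving finite products, such that every `f : ◇X ⟶ X` has a
unique "global" fixpoint `s : 1 ⟶ X` with `s = f ∘ p_X ∘ s`.  Then for every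
`f : ◇X × Y ⟶ X` there is a unique `s : Y ⟶ X` with `s = f ∘ (p_X × id_Y) ∘ ⟨s, id_Y⟩`. -/
theorem weakModel_isUniqueGuardedFixpointCategory
    {C : Type u} [Category.{v} C] [CartesianMonoidalCategory C] [MonoidalClosed C]
    (D : C ⥤ C) (p : 𝟭 C ⟶ D) [PreservesFiniteProducts D]
    (hweak : ∀ (X : C) (f : D.obj X ⟶ X), ∃! s : ⊤_ C ⟶ X, s = s ≫ p.app X ≫ f) :
    ∀ (X Y : C) (f : D.obj X ⨯ Y ⟶ X),
      ∃! s : Y ⟶ X, s = prod.lift s (𝟙 Y) ≫ prod.map (p.app X) (𝟙 Y) ≫ f := by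
  intro X Y f
  set j : D.obj X ⊗ Y ⟶ D.obj X ⨯ Y :=
    prod.lift (CartesianMonoidalCategory.fst _ _) (CartesianMonoidalCategory.snd _ _) with hj
  have key : ∀ s' : Y ⟶ X,
      CartesianMonoidalCategory.lift s' (𝟙 Y) ≫ (p.app X ⊗ₘ 𝟙 Y) ≫ j ≫ f
        = prod.lift s' (𝟙 Y) ≫ prod.map (p.app X) (𝟙 Y) ≫ f := by
    intro s'
    have e : CartesianMonoidalCategory.lift s' (𝟙 Y) ≫ (p.app X ⊗ₘ 𝟙 Y) ≫ j
        = prod.lift s' (𝟙 Y) ≫ prod.map (p.app X) (𝟙 Y) := by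
      apply Limits.prod.hom_ext <;>
        simp [hj, CartesianMonoidalCategory.tensorHom_fst, CartesianMonoidalCategory.tensorHom_snd]
    calc CartesianMonoidalCategory.lift s' (𝟙 Y) ≫ (p.app X ⊗ₘ 𝟙 Y) ≫ j ≫ f
        = (CartesianMonoidalCategory.lift s' (𝟙 Y) ≫ (p.app X ⊗ₘ 𝟙 Y) ≫ j) ≫ f := by
          simp only [Category.assoc]
      _ = prod.lift s' (𝟙 Y) ≫ prod.map (p.app X) (𝟙 Y) ≫ f := by
          rw [e]; simp only [Category.assoc]
  obtain ⟨s, hs, hu⟩ := WeakModelAux.aux D p hweak X Y (j ≫ f)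
  refine ⟨s, ?_, ?_⟩
  · show s = prod.lift s (𝟙 Y) ≫ prod.map (p.app X) (𝟙 Y) ≫ f
    rw [← key s]; exact hs
  · intro s' hs'
    apply hu s'
    show s' = CartesianMonoidalCategory.lift s' (𝟙 Y) ≫ (p.app X ⊗ₘ 𝟙 Y) ≫ j ≫ f
    rw [key s']; exact hs'
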